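/- Let S = {d₁, ..., d_N} be real numbers and d a real number such that at least (2/3)·N of the dᵢ satisfy |dᵢ - d| < ε. For each j define r_j = inf{r > 0 : |{i : |d_i - d_j| ≤ r}| ≥ (2/3)·N}, and let j* minimize r_j. Then |d_{j*} - d| < 3ε. -/

import Mathlib

/-- Robust aggregation: if at least `2/3` of the estimates `d i` are within `ε` of `d`,
then the estimate whose minimal-radius ball capturing `2/3` of the points has the
smallest radius is within `3ε` of `d`. -/
theorem robust_ball_selection
    (N : ℕ) (hN : 0 < N) (d : Fin N → ℝ) (dtrue ε : ℝ) (hε : 0 < ε)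
    (hmaj : (2/3 : ℝ) * N ≤ (Finset.univ.filter fun i => |d i - dtrue| < ε).card)
    (r : Fin N → ℝ)
    (hr : ∀ j, r j = sInf {ρ : ℝ | 0 < ρ ∧
      (2/3 : ℝ) * N ≤ (Finset.univ.filter fun i => |d i - d j| ≤ ρ).card})
    (jstar : Fin N) (hjstar : ∀ j, r jstar ≤ r j) :
    |d jstar - dtrue| < 3 * ε := by
  set G : Finset (Fin N) := Finset.univ.filter fun i => |d i - dtrue| < ε with hG
  have hGcard : (2/3 : ℝ) * N ≤ G.card := hmaj
  have hGpos : 0 < (G.card : ℝ) := by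
    refine lt_of_lt_of_le ?_ hGcard
    positivity
  have hGne : G.Nonempty := Finset.card_pos.mp (by exact_mod_cast hGpos)
  obtain ⟨j₀, hj₀⟩ := hGne
  have hj₀' : |d j₀ - dtrue| < ε := by
    simpa [hG] using hj₀
  -- radius bound for j₀
  set m : ℝ := G.sup' ⟨j₀, hj₀⟩ (fun i => |d i - d j₀|) with hm
  have hmlt : m < 2 * ε := by
    rw [hm]; refine (Finset.sup'_lt_iff _).mpr ?_
    intro i hi
    have hi' : |d i - dtrue| < ε := by simpa [hG] using hi
    calc |d i - d j₀| ≤ |d i - dtrue| + |dtrue - d j₀| := abs_sub_le _ _ _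
      _ < ε + ε := by
          have := abs_sub_comm (d j₀) dtrue
          linarith [hj₀', hi', (abs_sub_comm dtrue (d j₀)).ge]
      _ = 2 * ε := by ring
  set ρ₀ : ℝ := max m ε with hρ₀
  have hρ₀mem : ρ₀ ∈ {ρ : ℝ | 0 < ρ ∧
      (2/3 : ℝ) * N ≤ (Finset.univ.filter fun i => |d i - d j₀| ≤ ρ).card} := by
    constructor
    · exact lt_of_lt_of_le hε (le_max_right _ _)
    · refine le_trans hGcard ?_
      have hsub : G ⊆ Finset.univ.filter fun i => |d i - d j₀| ≤ ρ₀ := by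
        intro i hi
        simp only [Finset.mem_filter, Finset.mem_univ, true_and]
        exact le_trans (Finset.le_sup' (fun i => |d i - d j₀|) hi) (le_max_left _ _)
      exact_mod_cast Finset.card_le_card hsub
  have hbdd : ∀ j : Fin N, BddBelow {ρ : ℝ | 0 < ρ ∧
      (2/3 : ℝ) * N ≤ (Finset.univ.filter fun i => |d i - d j| ≤ ρ).card} := by
    intro j
    exact ⟨0, fun ρ hρ => le_of_lt hρ.1⟩
  have hrj₀ : r j₀ ≤ ρ₀ := by
    rw [hr j₀]
    exact csInf_le (hbdd j₀) hρ₀mem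
  have hρ₀lt : ρ₀ < 2 * ε := by
    apply max_lt hmlt
    linarith
  have hrstar : r jstar < 2 * ε := lt_of_le_of_lt (le_trans (hjstar j₀) hrj₀) hρ₀lt
  -- the set for jstar is nonempty
  have hune : (Finset.univ : Finset (Fin N)).Nonempty := ⟨jstar, Finset.mem_univ jstar⟩
  set M : ℝ := (Finset.univ.sup' hune (fun i => |d i - d jstar|)) + 1 with hM
  have hsne : ({ρ : ℝ | 0 < ρ ∧
      (2/3 : ℝ) * N ≤ (Finset.univ.filter fun i => |d i - d jstar| ≤ ρ).card}).Nonempty := by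
    refine ⟨M, ?_, ?_⟩
    · have h1 : |d jstar - d jstar| ≤ Finset.univ.sup' hune (fun i => |d i - d jstar|) :=
        Finset.le_sup' (fun i => |d i - d jstar|) (Finset.mem_univ jstar)
      have h2 : (0:ℝ) ≤ |d jstar - d jstar| := abs_nonneg _
      rw [hM]; linarith
    · have heq : (Finset.univ.filter fun i => |d i - d jstar| ≤ M) = Finset.univ := by
        refine Finset.eq_univ_of_forall fun i => ?_
        simp only [Finset.mem_filter, Finset.mem_univ, true_and]
        have := Finset.le_sup' (fun i => |d i - d jstar|) (Finset.mem_univ i)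
        rw [hM]; linarith
      rw [heq, Finset.card_univ, Fintype.card_fin]
      have hNpos : (0:ℝ) < N := by exact_mod_cast hN
      linarith
  -- pick ρ in the set with ρ < 2ε
  have hlt : sInf {ρ : ℝ | 0 < ρ ∧
      (2/3 : ℝ) * N ≤ (Finset.univ.filter fun i => |d i - d jstar| ≤ ρ).card} < 2 * ε := by
    rw [← hr jstar]; exact hrstar
  obtain ⟨ρ, hρmem, hρlt⟩ := exists_lt_of_csInf_lt hsne hlt
  set F : Finset (Fin N) := Finset.univ.filter fun i => |d i - d jstar| ≤ ρ with hF
  have hFcard : (2/3 : ℝ) * N ≤ F.card := hρmem.2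
  -- G and F intersect
  have hinter : (G ∩ F).Nonempty := by
    rw [← Finset.card_pos]
    by_contra h
    push_neg at h
    have h0 : (G ∩ F).card = 0 := Nat.le_zero.mp h
    have := Finset.card_inter_add_card_union G F
    have hun : (G ∪ F).card ≤ N := by
      have := Finset.card_le_card (Finset.subset_univ (G ∪ F))
      simpa [Finset.card_univ] using this
    have : G.card + F.card ≤ N := by omega
    have hcast : (G.card : ℝ) + F.card ≤ N := by exact_mod_cast this
    have hNpos : (0 : ℝ) < N := by exact_mod_cast hN
    linarith
  obtain ⟨i, hi⟩ := hinter
  have hiG : |d i - dtrue| < ε := by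
    have := Finset.mem_of_mem_inter_left hi
    simpa [hG] using this
  have hiF : |d i - d jstar| ≤ ρ := by
    have := Finset.mem_of_mem_inter_right hi
    simpa [hF] using this
  calc |d jstar - dtrue| ≤ |d jstar - d i| + |d i - dtrue| := abs_sub_le _ _ _
    _ < 2 * ε + ε := by
        have : |d jstar - d i| = |d i - d jstar| := abs_sub_comm _ _
        linarith
    _ = 3 * ε := by ring
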